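/- Let G be a finite p-group of order p^n and nilpotence class l ≥ 2. If |G^l| > p^{n/(l+1)}, then G^l is not cyclic. -/

import Mathlib

open scoped commutatorElement

namespace Stmt17Aux

variable {G : Type*} [Group G]

local notation "L" => Subgroup.lowerCentralSeries (⊤ : Subgroup G)

lemma L_succ_comm (n : ℕ) :
    (⊤ : Subgroup G).lowerCentralSeries (n+1) = ⁅(⊤ : Subgroup G).lowerCentralSeries n, (⊤ : Subgroup G)⁆ := rfl

lemma mem_step {j : ℕ} {a : G} (ha : a ∈ L j) (y : G) : ⁅a, y⁆ ∈ L (j+1) := by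
  rw [L_succ_comm]
  exact Subgroup.commutator_mem_commutator ha (Subgroup.mem_top y)

lemma mem_step' {j : ℕ} {c : G} (hc : c ∈ L j) (u : G) : ⁅u, c⁆ ∈ L (j+1) := by
  rw [← commutatorElement_inv]
  exact ((⊤ : Subgroup G).lowerCentralSeries (j+1)).inv_mem (mem_step hc u)

lemma mem_L_zero (a : G) : a ∈ L 0 := by
  rw [Subgroup.lowerCentralSeries_zero]; exact Subgroup.mem_top a

lemma cong_trans {s : ℕ} {a b c : G} (h1 : a * b⁻¹ ∈ L s) (h2 : b * c⁻¹ ∈ L s) :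
    a * c⁻¹ ∈ L s := by
  have e : a * c⁻¹ = (a * b⁻¹) * (b * c⁻¹) := by group
  rw [e]; exact mul_mem h1 h2

lemma cong_mul_right {s : ℕ} {u v : G} (h : u * v⁻¹ ∈ L s) (w : G) :
    (u * w) * (v * w)⁻¹ ∈ L s := by
  have e : (u * w) * (v * w)⁻¹ = u * v⁻¹ := by group
  rw [e]; exact h

lemma cong_inv {s : ℕ} {u v : G} (h : u * v⁻¹ ∈ L s) :
    u⁻¹ * (v⁻¹)⁻¹ ∈ L s := by
  have h2 := (Subgroup.lowerCentralSeries_normal ⊤ s).conj_mem _ (((⊤ : Subgroup G).lowerCentralSeries s).inv_mem h) u⁻¹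
  have e : u⁻¹ * (u * v⁻¹)⁻¹ * u⁻¹⁻¹ = u⁻¹ * (v⁻¹)⁻¹ := by group
  rwa [e] at h2

lemma mem_of_cong {s : ℕ} {a b : G} (h : a * b⁻¹ ∈ L s) (ha : a ∈ L s) : b ∈ L s := by
  have h2 := mul_mem (((⊤ : Subgroup G).lowerCentralSeries s).inv_mem h) ha
  have e : (a * b⁻¹)⁻¹ * a = b := by group
  rwa [e] at h2

lemma eq_of_cong_bot {s : ℕ} {a b : G} (h : a * b⁻¹ ∈ L s) (hs : (⊤ : Subgroup G).lowerCentralSeries s = ⊥) :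
    a = b := by
  rw [hs, Subgroup.mem_bot] at h
  exact eq_of_div_eq_one (by rwa [div_eq_mul_inv])

lemma mem_L_of_eq {s t : ℕ} {x : G} (h : x ∈ L s) (e : s = t) : x ∈ L t := e ▸ h

lemma step_cong {s : ℕ} {a b : G} (h : a * b⁻¹ ∈ L s) (y : G) :
    ⁅a, y⁆ * ⁅b, y⁆⁻¹ ∈ L (s+1) := by
  have ha : a = (a * b⁻¹) * b := by group
  have key : ⁅a, y⁆ * ⁅b, y⁆⁻¹ =
      ⁅a * b⁻¹, ⁅b, y⁆⁆ * (⁅b, y⁆ * ⁅a * b⁻¹, y⁆ * ⁅b, y⁆⁻¹) := by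
    conv_lhs => rw [ha]
    group
  rw [key]
  exact mul_mem (mem_step h _)
    ((Subgroup.lowerCentralSeries_normal ⊤ (s+1)).conj_mem _ (mem_step h y) _)

lemma step_mul {j : ℕ} (a : G) {b : G} (hb : b ∈ L j) (y : G) :
    ⁅a * b, y⁆ * (⁅a, y⁆ * ⁅b, y⁆)⁻¹ ∈ L (j+2) := by
  have key : ⁅a * b, y⁆ * (⁅a, y⁆ * ⁅b, y⁆)⁻¹ =
      ⁅a, ⁅b, y⁆⁆ * ⁅⁅b, y⁆, ⁅a, y⁆⁆ := by group
  rw [key]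
  exact mul_mem (mem_step' (mem_step hb y) a) (mem_step (mem_step hb y) _)

/-- iterated commutator with a list of elements -/
def iterC : List G → G → G
  | [], a => a
  | y :: ys, a => iterC ys ⁅a, y⁆

@[simp] lemma iterC_nil (a : G) : iterC [] a = a := rfl
@[simp] lemma iterC_cons (y : G) (ys : List G) (a : G) :
    iterC (y :: ys) a = iterC ys ⁅a, y⁆ := rfl

lemma iterC_append (s t : List G) (a : G) : iterC (s ++ t) a = iterC t (iterC s a) := by
  induction s generalizing a with
  | nil => rfl
  | cons y ys ih => simp [ih]

@[simp] lemma iterC_one (ys : List G) : iterC (ys : List G) (1 : G) = 1 := by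
  induction ys with
  | nil => rfl
  | cons y ys ih => simp [commutatorElement_def, ih]

lemma iterC_mem {j : ℕ} {a : G} (ha : a ∈ L j) (ys : List G) :
    iterC ys a ∈ L (j + ys.length) := by
  induction ys generalizing a j with
  | nil => simpa using ha
  | cons y ys ih =>
    have h := ih (mem_step ha y)
    rw [iterC_cons]
    exact mem_L_of_eq h (by simp; omega)

lemma iterC_cong {s : ℕ} {a b : G} (h : a * b⁻¹ ∈ L s) (ys : List G) :
    iterC ys a * (iterC ys b)⁻¹ ∈ L (s + ys.length) := by
  induction ys generalizing a b s with
  | nil => simpa using h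
  | cons y ys ih =>
    have h2 := ih (step_cong h y)
    rw [iterC_cons, iterC_cons]
    exact mem_L_of_eq h2 (by simp; omega)

lemma iterC_mul {j : ℕ} {a b : G} (ha : a ∈ L j) (hb : b ∈ L j) (ys : List G) :
    iterC ys (a * b) * (iterC ys a * iterC ys b)⁻¹ ∈ L (j + ys.length + 1) := by
  induction ys generalizing a b j with
  | nil => simp only [iterC_nil, mul_inv_cancel]; exact Subgroup.one_mem _
  | cons y ys ih =>
    have h1 := iterC_cong (step_mul a hb y) ys
    have h2 := ih (mem_step ha y) (mem_step hb y)
    rw [iterC_cons, iterC_cons, iterC_cons]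
    refine cong_trans (mem_L_of_eq h1 (by simp; omega)) (mem_L_of_eq h2 (by simp; omega))

lemma iterC_inv {j : ℕ} {a : G} (ha : a ∈ L j) (ys : List G) :
    iterC ys a⁻¹ * ((iterC ys a)⁻¹)⁻¹ ∈ L (j + ys.length + 1) := by
  have h1 := iterC_mul ha (((⊤ : Subgroup G).lowerCentralSeries j).inv_mem ha) ys
  rw [mul_inv_cancel, iterC_one] at h1
  have h2 := (Subgroup.lowerCentralSeries_normal ⊤ (j + ys.length + 1)).conj_mem _
    (((⊤ : Subgroup G).lowerCentralSeries _).inv_mem h1) (iterC ys a⁻¹)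
  have e : iterC ys a⁻¹ * (1 * (iterC ys a * iterC ys a⁻¹)⁻¹)⁻¹ * (iterC ys a⁻¹)⁻¹
      = iterC ys a⁻¹ * ((iterC ys a)⁻¹)⁻¹ := by group
  rwa [e] at h2

lemma iterC_pow {j : ℕ} {a : G} (ha : a ∈ L j) (ys : List G) (k : ℕ) :
    iterC ys (a ^ k) * ((iterC ys a) ^ k)⁻¹ ∈ L (j + ys.length + 1) := by
  induction k with
  | zero => simp only [pow_zero, iterC_one, inv_one, mul_one]; exact Subgroup.one_mem _
  | succ k ih =>
    have h1 := iterC_mul (pow_mem ha k) ha ys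
    rw [← pow_succ] at h1
    have h2 := cong_mul_right ih (iterC ys a)
    rw [← pow_succ] at h2
    exact cong_trans h1 h2

lemma iterC_zpow {j : ℕ} {a : G} (ha : a ∈ L j) (ys : List G) (k : ℤ) :
    iterC ys (a ^ k) * ((iterC ys a) ^ k)⁻¹ ∈ L (j + ys.length + 1) := by
  cases k with
  | ofNat k => simpa [zpow_natCast] using iterC_pow ha ys k
  | negSucc k =>
    have h1 := iterC_inv (pow_mem ha (k+1)) ys
    have h2 := cong_inv (iterC_pow ha ys (k+1))
    have h3 := cong_trans h1 h2
    rw [zpow_negSucc, zpow_negSucc]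
    exact h3

lemma mem_L_two_of_eq {x : G} {s : ℕ} (h : x ∈ L s) (e : s = 2) : x ∈ L 2 := e ▸ h

end Stmt17Aux

open Stmt17Aux

theorem stmt17 {G : Type*} [Group G] [Finite G] {p n l : ℕ} (hp : p.Prime)
    (hG : Nat.card G = p ^ n) (hl : 2 ≤ l)
    (hcl : (⊤ : Subgroup G).lowerCentralSeries l = ⊥) (hcl' : (⊤ : Subgroup G).lowerCentralSeries (l - 1) ≠ ⊥)
    (hbig : (Nat.card ((⊤ : Subgroup G).lowerCentralSeries (l - 1)) : ℝ) >
      (p : ℝ) ^ ((n : ℝ) / ((l : ℝ) + 1))) :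
    ¬ IsCyclic ((⊤ : Subgroup G).lowerCentralSeries (l - 1)) := by
  intro hcyc
  have hp1 : 1 < p := hp.one_lt
  have hdvd : Nat.card ((⊤ : Subgroup G).lowerCentralSeries (l-1)) ∣ p ^ n := by
    rw [← hG]; exact Subgroup.card_subgroup_dvd_card _
  obtain ⟨m, hmn, hcard⟩ := (Nat.dvd_prime_pow hp).mp hdvd
  have hm1 : 1 ≤ m := by
    rcases Nat.eq_zero_or_pos m with h0 | h
    · exfalso; apply hcl'
      rw [← Subgroup.card_eq_one, hcard, h0, pow_zero]
    · exact h
  have hbot : ∀ s, l ≤ s → (⊤ : Subgroup G).lowerCentralSeries s = ⊥ := fun s hs =>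
    le_bot_iff.mp (hcl ▸ Subgroup.lowerCentralSeries_antitone ⊤ hs)
  -- from the analytic hypothesis : n < m * (l+1)
  have hnlt : n < m * (l + 1) := by
    rw [hcard] at hbig
    have hbig2 : (p : ℝ) ^ ((n : ℝ) / ((l : ℝ) + 1)) < (p:ℝ) ^ (m : ℝ) := by
      rw [Real.rpow_natCast]
      exact_mod_cast hbig
    have hp1R : (1:ℝ) < p := by exact_mod_cast hp1
    have h2 := (Real.rpow_lt_rpow_left_iff hp1R).mp hbig2
    rw [div_lt_iff₀ (by positivity)] at h2
    have h3 : (n:ℝ) < ((m * (l+1) : ℕ) : ℝ) := by push_cast; linarith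
    exact_mod_cast h3
  -- descent : find a simple-commutator generator
  obtain ⟨g0, hg0⟩ := hcyc.exists_generator
  have hg0ord : orderOf (g0 : G) = p ^ m := by
    have h1 : orderOf (g0 : G) = orderOf g0 := Subgroup.orderOf_coe g0
    rw [h1, orderOf_eq_card_of_forall_mem_zpowers hg0, hcard]
  have descend : ∀ t, t ≤ l - 1 → ∃ (x : G) (ys : List G), ys.length = t ∧
      x ∈ (⊤ : Subgroup G).lowerCentralSeries (l - 1 - t) ∧ orderOf (iterC ys x) = p ^ m := by
    intro t
    induction t with
    | zero => exact fun _ => ⟨g0, [], rfl, by simpa using g0.2, hg0ord⟩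
    | succ t ih =>
      intro ht
      obtain ⟨x, ys, hlen, hx, hord⟩ := ih (by omega)
      have hjj : l - 1 - t = (l - 2 - t) + 1 := by omega
      rw [hjj, Subgroup.lowerCentralSeries_succ] at hx
      have key : ∃ u v : G, u ∈ (⊤ : Subgroup G).lowerCentralSeries (l - 2 - t) ∧
          (iterC ys ⁅u, v⁆) ^ (p ^ (m-1)) ≠ 1 := by
        by_contra hall
        push_neg at hall
        have main : x ∈ (⊤ : Subgroup G).lowerCentralSeries ((l-2-t)+1) ∧
            (iterC ys x) ^ (p^(m-1)) = 1 := by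
          refine Subgroup.closure_induction
            (p := fun w _ => w ∈ (⊤ : Subgroup G).lowerCentralSeries ((l-2-t)+1) ∧
              (iterC ys w) ^ (p^(m-1)) = 1) ?_ ?_ ?_ ?_ hx
          · rintro w ⟨z, hz, y, -, rfl⟩
            exact ⟨mem_step hz y, hall z y hz⟩
          · exact ⟨one_mem _, by simp⟩
          · rintro w1 w2 hw1 hw2 ⟨hmm1, hpw1⟩ ⟨hmm2, hpw2⟩
            refine ⟨mul_mem hmm1 hmm2, ?_⟩
            have e : iterC ys (w1*w2) = iterC ys w1 * iterC ys w2 :=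
              eq_of_cong_bot (mem_L_of_eq (iterC_mul hmm1 hmm2 ys)
                (by rw [hlen]; omega)) (hbot l le_rfl)
            have hmemc : iterC ys w1 ∈ (⊤ : Subgroup G).lowerCentralSeries (l-1) :=
              mem_L_of_eq (iterC_mem hmm1 ys) (by rw [hlen]; omega)
            have hcomm : Commute (iterC ys w1) (iterC ys w2) := by
              have h5 := mem_step hmemc (iterC ys w2)
              rw [(by omega : l - 1 + 1 = l), hbot l le_rfl, Subgroup.mem_bot] at h5
              exact commutatorElement_eq_one_iff_commute.mp h5
            rw [e, hcomm.mul_pow, hpw1, hpw2, one_mul]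
          · rintro w hw ⟨hmm1, hpw1⟩
            refine ⟨inv_mem hmm1, ?_⟩
            have e : iterC ys w⁻¹ = (iterC ys w)⁻¹ :=
              eq_of_cong_bot (mem_L_of_eq (iterC_inv hmm1 ys)
                (by rw [hlen]; omega)) (hbot l le_rfl)
            rw [e, inv_pow, hpw1, inv_one]
        have hd := orderOf_dvd_of_pow_eq_one main.2
        rw [hord] at hd
        have := (Nat.pow_dvd_pow_iff_le_right hp1).mp hd
        omega
      obtain ⟨u, v, hu, hne⟩ := key
      have humem : u ∈ (⊤ : Subgroup G).lowerCentralSeries (l - 1 - (t+1)) :=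
        mem_L_of_eq hu (by omega)
      have hmemw : iterC ys ⁅u,v⁆ ∈ (⊤ : Subgroup G).lowerCentralSeries (l-1) :=
        mem_L_of_eq (iterC_mem (mem_step hu v) ys) (by rw [hlen]; omega)
      have hdvd2 : orderOf (iterC ys ⁅u,v⁆) ∣ p ^ m := by
        have h1 := orderOf_dvd_natCard
          (⟨iterC ys ⁅u,v⁆, hmemw⟩ : (⊤ : Subgroup G).lowerCentralSeries (l-1))
        rw [hcard] at h1
        have h2 := Subgroup.orderOf_coe
          (⟨iterC ys ⁅u,v⁆, hmemw⟩ : (⊤ : Subgroup G).lowerCentralSeries (l-1))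
        rw [← h2] at h1
        exact h1
      obtain ⟨s, hs, hsord⟩ := (Nat.dvd_prime_pow hp).mp hdvd2
      have hsm : s = m := by
        by_contra hne2
        apply hne
        apply orderOf_dvd_iff_pow_eq_one.mp
        rw [hsord]
        exact pow_dvd_pow p (by omega)
      refine ⟨u, v :: ys, by simp [hlen], humem, ?_⟩
      rw [iterC_cons, hsord, hsm]
  obtain ⟨x, ys, hlen, -, hord⟩ := descend (l-1) le_rfl
  obtain ⟨v, ys', rfl⟩ : ∃ v ys', ys = v :: ys' := by
    cases ys with
    | nil => exfalso; simp at hlen; omega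
    | cons v ys' => exact ⟨v, ys', rfl⟩
  -- membership of partial iterated commutators
  have zmem : ∀ j, j ≤ l - 1 → iterC (List.take j (v :: ys')) x ∈ (⊤ : Subgroup G).lowerCentralSeries j := by
    intro j hj
    have h := iterC_mem (mem_L_zero x) (List.take j (v :: ys'))
    rwa [zero_add, List.length_take, hlen, min_eq_left hj] at h
  -- the key order property at each level
  have level : ∀ j, j ≤ l - 1 → ∀ k : ℤ,
      (iterC (List.take j (v :: ys')) x) ^ k ∈ (⊤ : Subgroup G).lowerCentralSeries (j+1) →
      ((p^m : ℕ) : ℤ) ∣ k := by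
    intro j hj k hk
    have e1 : iterC (List.drop j (v :: ys')) ((iterC (List.take j (v :: ys')) x) ^ k) = 1 := by
      have h := iterC_mem hk (List.drop j (v :: ys'))
      rw [List.length_drop, hlen, (by omega : j + 1 + (l - 1 - j) = l),
        hbot l le_rfl, Subgroup.mem_bot] at h
      exact h
    have e3 : iterC (List.drop j (v :: ys')) (iterC (List.take j (v :: ys')) x)
        = iterC (v :: ys') x := by
      rw [← iterC_append, List.take_append_drop]
    have e2 : iterC (List.drop j (v :: ys')) ((iterC (List.take j (v :: ys')) x) ^ k)
        = (iterC (v :: ys') x) ^ k := by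
      have h := iterC_zpow (zmem j hj) (List.drop j (v :: ys')) k
      rw [e3] at h
      refine eq_of_cong_bot (mem_L_of_eq h ?_) (hbot l le_rfl)
      rw [List.length_drop, hlen]; omega
    rw [e2] at e1
    rw [← hord]
    exact orderOf_dvd_iff_zpow_eq_one.mpr e1
  -- the two-variable property at the bottom level
  have twovar : ∀ A B : ℤ, x ^ A * v ^ B ∈ (⊤ : Subgroup G).lowerCentralSeries 1 →
      ((p^m : ℕ) : ℤ) ∣ A ∧ ((p^m : ℕ) : ℤ) ∣ B := by
    intro A B hW
    constructor
    · -- coefficient of x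
      have e1 : iterC (v :: ys') (x ^ A * v ^ B) = 1 := by
        have h := iterC_mem hW (v :: ys')
        rw [hlen, (by omega : 1 + (l-1) = l), hbot l le_rfl, Subgroup.mem_bot] at h
        exact h
      have e2 : iterC (v :: ys') (x ^ A * v ^ B)
          = iterC (v :: ys') (x ^ A) * iterC (v :: ys') (v ^ B) :=
        eq_of_cong_bot (mem_L_of_eq (iterC_mul (mem_L_zero _) (mem_L_zero _) (v :: ys'))
          (by rw [hlen]; omega)) (hbot l le_rfl)
      have e3 : iterC (v :: ys') (x ^ A) = (iterC (v :: ys') x) ^ A :=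
        eq_of_cong_bot (mem_L_of_eq (iterC_zpow (mem_L_zero x) (v :: ys') A)
          (by rw [hlen]; omega)) (hbot l le_rfl)
      have e4 : iterC (v :: ys') (v ^ B) = (iterC (v :: ys') v) ^ B :=
        eq_of_cong_bot (mem_L_of_eq (iterC_zpow (mem_L_zero v) (v :: ys') B)
          (by rw [hlen]; omega)) (hbot l le_rfl)
      have e5 : iterC (v :: ys') v = 1 := by
        rw [iterC_cons, commutatorElement_self, iterC_one]
      have e6 : (iterC (v :: ys') x) ^ A = 1 := by
        rw [e2, e3, e4, e5, one_zpow, mul_one] at e1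
        exact e1
      rw [← hord]
      exact orderOf_dvd_iff_zpow_eq_one.mpr e6
    · -- coefficient of v
      have hWx : ⁅x, x ^ A * v ^ B⁆ ∈ (⊤ : Subgroup G).lowerCentralSeries 2 :=
        mem_L_two_of_eq (mem_step' hW x) rfl
      have t2 := iterC_mul (mem_L_zero (x ^ A)) (mem_L_zero (v ^ B)) [x]
      simp only [iterC_cons, iterC_nil, List.length_cons, List.length_nil, zero_add] at t2
      have t3 : ⁅x ^ A, x⁆ = 1 :=
        commutatorElement_eq_one_iff_commute.mpr ((Commute.refl x).zpow_left A)
      rw [t3, one_mul] at t2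
      have t2' : ⁅x ^ A * v ^ B, x⁆ * ⁅v ^ B, x⁆⁻¹ ∈ (⊤ : Subgroup G).lowerCentralSeries 2 :=
        mem_L_two_of_eq t2 rfl
      have t1 : ⁅x ^ A * v ^ B, x⁆ ∈ (⊤ : Subgroup G).lowerCentralSeries 2 := by
        rw [← commutatorElement_inv]
        exact inv_mem hWx
      have tB : ⁅v ^ B, x⁆ ∈ (⊤ : Subgroup G).lowerCentralSeries 2 := mem_of_cong t2' t1
      have t4 := iterC_zpow (mem_L_zero v) [x] B
      simp only [iterC_cons, iterC_nil, List.length_cons, List.length_nil, zero_add] at t4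
      have t4' : ⁅v ^ B, x⁆ * ((⁅v, x⁆) ^ B)⁻¹ ∈ (⊤ : Subgroup G).lowerCentralSeries 2 :=
        mem_L_two_of_eq t4 rfl
      have tB2 : (⁅v, x⁆) ^ B ∈ (⊤ : Subgroup G).lowerCentralSeries 2 := mem_of_cong t4' tB
      have tB3 : (⁅x, v⁆) ^ B ∈ (⊤ : Subgroup G).lowerCentralSeries 2 := by
        rw [← commutatorElement_inv, inv_zpow]
        exact inv_mem tB2
      have hiter1 : iterC (List.take 1 (v :: ys')) x = ⁅x, v⁆ := rfl
      have := level 1 (by omega) B (by rw [hiter1]; exact mem_L_two_of_eq tB3 rfl)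
      exact this
  -- counting: each intermediate slice has at least p^m elements
  have cardstep : ∀ j, j ≤ l - 1 →
      p^m * Nat.card ((⊤ : Subgroup G).lowerCentralSeries (j+1)) ≤ Nat.card ((⊤ : Subgroup G).lowerCentralSeries j) := by
    intro j hj
    set z := iterC (List.take j (v :: ys')) x with hz
    have hzmem : z ∈ (⊤ : Subgroup G).lowerCentralSeries j := zmem j hj
    set f : Fin (p^m) × ((⊤ : Subgroup G).lowerCentralSeries (j+1)) → ((⊤ : Subgroup G).lowerCentralSeries j) :=
      fun ab => ⟨z ^ ((ab.1 : ℕ) : ℤ) * (ab.2 : G),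
        mul_mem (zpow_mem hzmem _) (Subgroup.lowerCentralSeries_antitone ⊤ (Nat.le_succ j) ab.2.2)⟩
      with hf
    have hinj : Function.Injective f := by
      rintro ⟨k1, h1⟩ ⟨k2, h2⟩ he
      simp only [hf, Subtype.mk_eq_mk] at he
      have e2 : z ^ ((k1:ℕ) : ℤ) = z ^ ((k2:ℕ) : ℤ) * ((h2 : G) * (h1 : G)⁻¹) := by
        rw [← mul_assoc, ← he, mul_assoc, mul_inv_cancel, mul_one]
      have e3 : z ^ (((k1:ℕ) : ℤ) - ((k2:ℕ) : ℤ))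
          = z ^ ((k2:ℕ) : ℤ) * ((h2 : G) * (h1 : G)⁻¹) * (z ^ ((k2:ℕ) : ℤ))⁻¹ := by
        rw [zpow_sub, e2]
      have hk : z ^ (((k1:ℕ) : ℤ) - ((k2:ℕ) : ℤ)) ∈ (⊤ : Subgroup G).lowerCentralSeries (j+1) := by
        rw [e3]
        exact (Subgroup.lowerCentralSeries_normal ⊤ (j+1)).conj_mem _
          (mul_mem h2.2 (inv_mem h1.2)) _
      have hdvd3 := level j hj _ hk
      have hb1 : ((k1:ℕ):ℤ) < (p^m : ℕ) := by exact_mod_cast k1.isLt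
      have hb2 : ((k2:ℕ):ℤ) < (p^m : ℕ) := by exact_mod_cast k2.isLt
      have h0 := Int.eq_zero_of_abs_lt_dvd hdvd3
        (abs_lt.mpr ⟨by omega, by omega⟩)
      have hk12 : k1 = k2 := by
        apply Fin.ext
        omega
      subst hk12
      have hh : (h1 : G) = (h2 : G) := mul_left_cancel he
      rw [Prod.mk.injEq]
      exact ⟨rfl, Subtype.ext hh⟩
    have hcount := Nat.card_le_card_of_injective f hinj
    simpa [Nat.card_prod] using hcount
  -- the top slice has at least p^(2m) elements
  have topstep : p^m * (p^m * Nat.card ((⊤ : Subgroup G).lowerCentralSeries 1)) ≤ Nat.card G := by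
    set f : Fin (p^m) × Fin (p^m) × ((⊤ : Subgroup G).lowerCentralSeries 1) → G :=
      fun cah => v ^ ((cah.1 : ℕ) : ℤ) * x ^ ((cah.2.1 : ℕ) : ℤ) * (cah.2.2 : G)
      with hf
    have hinj : Function.Injective f := by
      rintro ⟨c1, a1, h1⟩ ⟨c2, a2, h2⟩ he
      simp only [hf] at he
      have h5 : v ^ ((c1:ℕ):ℤ) * (x ^ ((a1:ℕ):ℤ) * ((h1:G) * (h2:G)⁻¹) * (x ^ ((a2:ℕ):ℤ))⁻¹)
          = v ^ ((c2:ℕ):ℤ) := by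
        calc v ^ ((c1:ℕ):ℤ) * (x ^ ((a1:ℕ):ℤ) * ((h1:G) * (h2:G)⁻¹) * (x ^ ((a2:ℕ):ℤ))⁻¹)
            = (v ^ ((c1:ℕ):ℤ) * x ^ ((a1:ℕ):ℤ) * (h1:G)) * ((h2:G)⁻¹ * (x ^ ((a2:ℕ):ℤ))⁻¹) := by
              group
          _ = (v ^ ((c2:ℕ):ℤ) * x ^ ((a2:ℕ):ℤ) * (h2:G)) * ((h2:G)⁻¹ * (x ^ ((a2:ℕ):ℤ))⁻¹) := by
              rw [he]
          _ = v ^ ((c2:ℕ):ℤ) := by group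
      have eq1 : x ^ ((a1:ℕ):ℤ) * ((h1:G) * (h2:G)⁻¹) * (x ^ ((a2:ℕ):ℤ))⁻¹
          = v ^ (((c2:ℕ):ℤ) - ((c1:ℕ):ℤ)) := by
        have h6 : x ^ ((a1:ℕ):ℤ) * ((h1:G) * (h2:G)⁻¹) * (x ^ ((a2:ℕ):ℤ))⁻¹
            = (v ^ ((c1:ℕ):ℤ))⁻¹ * v ^ ((c2:ℕ):ℤ) := by
          rw [← h5]; group
        rw [h6, ← zpow_neg, ← zpow_add, neg_add_eq_sub]
      have eq2 : x ^ (((a1:ℕ):ℤ) - ((a2:ℕ):ℤ)) * v ^ (((c1:ℕ):ℤ) - ((c2:ℕ):ℤ))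
          = v ^ (((c2:ℕ):ℤ) - ((c1:ℕ):ℤ))
            * (x ^ ((a2:ℕ):ℤ) * ((h1:G) * (h2:G)⁻¹) * (x ^ ((a2:ℕ):ℤ))⁻¹)⁻¹
            * (v ^ (((c2:ℕ):ℤ) - ((c1:ℕ):ℤ)))⁻¹ := by
        have e7 : x ^ (((a1:ℕ):ℤ) - ((a2:ℕ):ℤ)) = x ^ ((a1:ℕ):ℤ) * (x ^ ((a2:ℕ):ℤ))⁻¹ :=
          zpow_sub x _ _
        have e8 : v ^ (((c1:ℕ):ℤ) - ((c2:ℕ):ℤ)) = (v ^ (((c2:ℕ):ℤ) - ((c1:ℕ):ℤ)))⁻¹ := by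
          rw [← zpow_neg, neg_sub]
        rw [e7, e8, ← eq1]
        group
      have hKmem : x ^ ((a2:ℕ):ℤ) * ((h1:G) * (h2:G)⁻¹) * (x ^ ((a2:ℕ):ℤ))⁻¹
          ∈ (⊤ : Subgroup G).lowerCentralSeries 1 :=
        (Subgroup.lowerCentralSeries_normal ⊤ 1).conj_mem _ (mul_mem h1.2 (inv_mem h2.2)) _
      have hM : x ^ (((a1:ℕ):ℤ) - ((a2:ℕ):ℤ)) * v ^ (((c1:ℕ):ℤ) - ((c2:ℕ):ℤ))
          ∈ (⊤ : Subgroup G).lowerCentralSeries 1 := by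
        rw [eq2]
        exact (Subgroup.lowerCentralSeries_normal ⊤ 1).conj_mem _ (inv_mem hKmem) _
      obtain ⟨dA, dC⟩ := twovar _ _ hM
      have hb1 : ((a1:ℕ):ℤ) < (p^m : ℕ) := by exact_mod_cast a1.isLt
      have hb2 : ((a2:ℕ):ℤ) < (p^m : ℕ) := by exact_mod_cast a2.isLt
      have hb3 : ((c1:ℕ):ℤ) < (p^m : ℕ) := by exact_mod_cast c1.isLt
      have hb4 : ((c2:ℕ):ℤ) < (p^m : ℕ) := by exact_mod_cast c2.isLt
      have hA0 := Int.eq_zero_of_abs_lt_dvd dA (abs_lt.mpr ⟨by omega, by omega⟩)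
      have hC0 := Int.eq_zero_of_abs_lt_dvd dC (abs_lt.mpr ⟨by omega, by omega⟩)
      have ha : a1 = a2 := by apply Fin.ext; omega
      have hc : c1 = c2 := by apply Fin.ext; omega
      subst ha; subst hc
      have hh : (h1 : G) = (h2 : G) := mul_left_cancel he
      rw [Prod.mk.injEq, Prod.mk.injEq]
      exact ⟨rfl, rfl, Subtype.ext hh⟩
    have hcount := Nat.card_le_card_of_injective f hinj
    simpa [Nat.card_prod, mul_assoc] using hcount
  -- assemble the chain of inequalities
  have chain : ∀ t, t ≤ l - 1 → (p^m) ^ t ≤ Nat.card ((⊤ : Subgroup G).lowerCentralSeries (l - t)) := by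
    intro t
    induction t with
    | zero =>
      intro _
      simp only [pow_zero, Nat.sub_zero]
      exact Nat.card_pos
    | succ t ih =>
      intro ht
      have h1 := ih (by omega)
      have h2 := cardstep (l - t - 1) (by omega)
      rw [(by omega : l - t - 1 + 1 = l - t)] at h2
      calc (p^m) ^ (t+1) = p^m * (p^m) ^ t := by ring
        _ ≤ p^m * Nat.card ((⊤ : Subgroup G).lowerCentralSeries (l - t)) := Nat.mul_le_mul_left _ h1
        _ ≤ Nat.card ((⊤ : Subgroup G).lowerCentralSeries (l - t - 1)) := h2
        _ = Nat.card ((⊤ : Subgroup G).lowerCentralSeries (l - (t+1))) := by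
            rw [(by omega : l - t - 1 = l - (t+1))]
  have hchain := chain (l-1) le_rfl
  rw [(by omega : l - (l-1) = 1)] at hchain
  have final : (p^m) ^ (l+1) ≤ p ^ n := by
    rw [← hG]
    calc (p^m) ^ (l+1) = p^m * (p^m * (p^m) ^ (l-1)) := by
          rw [(by omega : l + 1 = 1 + 1 + (l-1)), pow_add, pow_add, pow_one]; ring
      _ ≤ p^m * (p^m * Nat.card ((⊤ : Subgroup G).lowerCentralSeries 1)) :=
          Nat.mul_le_mul_left _ (Nat.mul_le_mul_left _ hchain)
      _ ≤ Nat.card G := topstep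
  rw [← pow_mul] at final
  have := (Nat.pow_le_pow_iff_right hp1).mp final
  omega
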